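/- The function u ↦ ln(ln(1 + e^u)) is concave on ℝ. -/

import Mathlib

open Real

private lemma aux_hLpos (u : ℝ) : 0 < Real.log (1 + Real.exp u) :=
  Real.log_pos (by linarith [Real.exp_pos u])

private lemma aux_hL' (u : ℝ) :
    HasDerivAt (fun u : ℝ => Real.log (1 + Real.exp u)) (Real.exp u / (1 + Real.exp u)) u :=
  ((Real.hasDerivAt_exp u).const_add 1).log (by positivity)

private lemma aux_hf' (u : ℝ) :
    HasDerivAt (fun u : ℝ => Real.log (Real.log (1 + Real.exp u)))
      (Real.exp u / ((1 + Real.exp u) * Real.log (1 + Real.exp u))) u := by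
  have h := (aux_hL' u).log (ne_of_gt (aux_hLpos u))
  simpa [div_div] using h

private lemma aux_hh (u : ℝ) :
    HasDerivAt (fun u : ℝ => (1 + Real.exp u) * Real.log (1 + Real.exp u))
      (Real.exp u * Real.log (1 + Real.exp u) + Real.exp u) u := by
  have h1 : HasDerivAt (fun u : ℝ => 1 + Real.exp u) (Real.exp u) u :=
    (Real.hasDerivAt_exp u).const_add 1
  have h := h1.mul (aux_hL' u)
  convert h using 1
  case e'_4 => rfl
  case e'_5 => rfl
  case e'_8 => rfl
  have hne : (1 + Real.exp u) ≠ 0 := by positivity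
  rw [mul_div_cancel₀ _ hne]

private lemma aux_hF' (u : ℝ) :
    HasDerivAt (fun u : ℝ => Real.exp u / ((1 + Real.exp u) * Real.log (1 + Real.exp u)))
      ((Real.exp u * ((1 + Real.exp u) * Real.log (1 + Real.exp u)) -
        Real.exp u * (Real.exp u * Real.log (1 + Real.exp u) + Real.exp u)) /
        ((1 + Real.exp u) * Real.log (1 + Real.exp u)) ^ 2) u :=
  (Real.hasDerivAt_exp u).div (aux_hh u)
    (ne_of_gt (mul_pos (by positivity) (aux_hLpos u)))

/-- Section III-C: u ↦ ln(ln(1 + e^u)) is concave on ℝ. -/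
theorem concave_log_log_one_add_exp :
    ConcaveOn ℝ Set.univ (fun u : ℝ => Real.log (Real.log (1 + Real.exp u))) := by
  set f : ℝ → ℝ := fun u : ℝ => Real.log (Real.log (1 + Real.exp u)) with hf
  set F : ℝ → ℝ := fun u : ℝ => Real.exp u / ((1 + Real.exp u) * Real.log (1 + Real.exp u))
    with hF
  have hd1 : deriv f = F := funext fun x => (aux_hf' x).deriv
  apply concaveOn_univ_of_deriv2_nonpos
  · exact fun x => (aux_hf' x).differentiableAt
  · rw [hd1]; exact fun x => (aux_hF' x).differentiableAt
  · intro x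
    have h2 : deriv^[2] f x = deriv F x := by
      show deriv (deriv f) x = deriv F x
      rw [hd1]
    rw [h2, (aux_hF' x).deriv]
    have hLle : Real.log (1 + Real.exp x) ≤ Real.exp x := by
      have := Real.log_le_sub_one_of_pos (x := 1 + Real.exp x) (by positivity)
      linarith
    apply div_nonpos_of_nonpos_of_nonneg
    · nlinarith [Real.exp_pos x, aux_hLpos x]
    · positivity
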